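/- arXiv:1512.03199 — 5 statements merged into one kernel-verified Lean document; each statement's English description precedes it below -/
import Mathlib

section
/- Let G = (V,E) be a finite self-loopless directed graph and I ⊆ V. Then I fills V if and only if A(G) ⊆ I and I intersects every cycle of G. -/
/-- Incoming vertices of `v` w.r.t. edge relation `E`. -/
def inSet {V : Type*} (E : V → V → Prop) (v : V) : Set V := {w | E w v}

/-- Vertices (completely) determined by `S`. -/
def Dtm {V : Type*} (E : V → V → Prop) (S : Set V) : Set V :=
  {v | (inSet E v).Nonempty ∧ inSet E v ⊆ S}

/-- Iterated determination closure. -/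
def dcl {V : Type*} (E : V → V → Prop) (I : Set V) : ℕ → Set V
  | 0 => I
  | n + 1 => dcl E I n ∪ Dtm E (dcl E I n)

/-- `I` fills the vertex set. -/
def Fills {V : Type*} (E : V → V → Prop) (I : Set V) : Prop :=
  ∃ n, dcl E I n = Set.univ

/-- `C` is (the vertex image of) a directed closed walk of positive length. -/
def IsCycle {V : Type*} (E : V → V → Prop) (C : Set V) : Prop :=
  ∃ (n : ℕ) (p : ℕ → V), 1 ≤ n ∧ p 0 = p n ∧ (∀ k < n, E (p k) (p (k + 1))) ∧
    C = p '' {k | k ≤ n}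

lemma dcl_mono {V : Type*} (E : V → V → Prop) (I : Set V) {m n : ℕ} (h : m ≤ n) :
    dcl E I m ⊆ dcl E I n := by
  induction h with
  | refl => exact subset_rfl
  | step _ ih => exact ih.trans Set.subset_union_left

lemma cycle_pred {V : Type*} {E : V → V → Prop} {C : Set V} (hC : IsCycle E C) :
    ∀ v ∈ C, ∃ w ∈ C, E w v := by
  obtain ⟨n, p, hn, h0, hE, rfl⟩ := hC
  rintro v ⟨k, hk, rfl⟩
  rcases Nat.eq_zero_or_pos k with rfl | hkpos
  · refine ⟨p (n - 1), ⟨n - 1, by simp only [Set.mem_setOf_eq]; omega, rfl⟩, ?_⟩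
    rw [h0]
    have := hE (n - 1) (by omega)
    rwa [show n - 1 + 1 = n by omega] at this
  · refine ⟨p (k - 1), ⟨k - 1, by simp only [Set.mem_setOf_eq] at hk ⊢; omega, rfl⟩, ?_⟩
    have := hE (k - 1) (by simp only [Set.mem_setOf_eq] at hk; omega)
    rwa [show k - 1 + 1 = k by omega] at this

theorem chara1 {V : Type*} [Fintype V] (E : V → V → Prop)
    (hloopless : ∀ v, ¬ E v v) (I : Set V) :
    Fills E I ↔ ({v : V | inSet E v = ∅} ⊆ I ∧ ∀ C : Set V, IsCycle E C → (C ∩ I).Nonempty) := by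
  constructor
  · rintro ⟨n, hn⟩
    constructor
    · intro v hv
      have hv' : v ∈ dcl E I n := hn ▸ Set.mem_univ v
      clear hn
      induction n with
      | zero => exact hv'
      | succ m ih =>
        rcases hv' with h | h
        · exact ih h
        · exact absurd h.1 (by rw [Set.mem_setOf_eq.mp hv]; exact Set.not_nonempty_empty)
    · intro C hC
      by_contra hempty
      have hdisj : ∀ m, dcl E I m ∩ C = ∅ := by
        intro m
        induction m with
        | zero =>
          rw [← Set.not_nonempty_iff_eq_empty]
          intro ⟨v, hvI, hvC⟩
          exact hempty ⟨v, hvC, hvI⟩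
        | succ m ih =>
          rw [← Set.not_nonempty_iff_eq_empty]
          rintro ⟨v, hv, hvC⟩
          rcases hv with h | h
          · exact (Set.not_nonempty_iff_eq_empty.mpr ih) ⟨v, h, hvC⟩
          · obtain ⟨w, hwC, hwE⟩ := cycle_pred hC v hvC
            exact (Set.not_nonempty_iff_eq_empty.mpr ih) ⟨w, h.2 hwE, hwC⟩
      obtain ⟨n', p, hn', h0, hEp, hCeq⟩ := hC
      have : p 0 ∈ dcl E I n ∩ C := by
        refine ⟨hn ▸ Set.mem_univ _, ?_⟩
        rw [hCeq]; exact ⟨0, by simp, rfl⟩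
      rw [hdisj n] at this
      exact this
  · rintro ⟨hsrc, hcyc⟩
    -- find a fixed point of dcl
    have hstab : ∃ N, Dtm E (dcl E I N) ⊆ dcl E I N := by
      by_contra hcon
      push_neg at hcon
      have hstrict : ∀ m, dcl E I m ⊂ dcl E I (m + 1) := by
        intro m
        obtain ⟨v, hv1, hv2⟩ := Set.not_subset.mp (hcon m)
        exact ⟨Set.subset_union_left, fun hs => hv2 (hs (Set.mem_union_right _ hv1))⟩
      have hcard : ∀ m, m ≤ (dcl E I m).ncard := by
        intro m
        induction m with
        | zero => exact Nat.zero_le _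
        | succ m ih =>
          have := Set.ncard_lt_ncard (hstrict m) (Set.toFinite _)
          omega
      have h1 := hcard (Fintype.card V + 1)
      have h2 : (dcl E I (Fintype.card V + 1)).ncard ≤ Fintype.card V := by
        have := Set.ncard_le_ncard (Set.subset_univ (dcl E I (Fintype.card V + 1))) (Set.toFinite _)
        simpa [Set.ncard_univ, Nat.card_eq_fintype_card] using this
      omega
    obtain ⟨N, hN⟩ := hstab
    refine ⟨N, ?_⟩
    by_contra hne
    have hT : ((dcl E I N)ᶜ).Nonempty := by
      rw [Set.nonempty_compl]; exact hne
    set T := (dcl E I N)ᶜ with hTdef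
    have hpred : ∀ v ∈ T, ∃ w ∈ T, E w v := by
      intro v hv
      have hnonempty : (inSet E v).Nonempty := by
        by_contra h
        rw [Set.not_nonempty_iff_eq_empty] at h
        have : v ∈ I := hsrc h
        exact hv (dcl_mono E I (Nat.zero_le N) this)
      by_contra h
      push_neg at h
      have hsub : inSet E v ⊆ dcl E I N := by
        intro w hw
        by_contra hw'
        exact h w hw' hw
      exact hv (hN ⟨hnonempty, hsub⟩)
    -- build an infinite backwards chain in T
    obtain ⟨v0, hv0⟩ := hT
    have : ∀ y : T, ∃ z : T, E z.1 y.1 := by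
      rintro ⟨y, hy⟩
      obtain ⟨w, hw, hwE⟩ := hpred y hy
      exact ⟨⟨w, hw⟩, hwE⟩
    choose g hg using this
    set x : T := ⟨v0, hv0⟩ with hx
    obtain ⟨i, j, hij, heq⟩ := Finite.exists_ne_map_eq_of_infinite (fun k : ℕ => g^[k] x)
    wlog hlt : i < j generalizing i j
    · exact this j i hij.symm heq.symm (by omega)
    set n := j - i with hn
    set p : ℕ → V := fun k => (g^[j - k] x).1 with hp
    have hcycle : IsCycle E (p '' {k | k ≤ n}) := by
      refine ⟨n, p, by omega, ?_, ?_, rfl⟩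
      · simp only [hp, Nat.sub_zero, show j - n = i by omega]
        exact congrArg Subtype.val heq.symm
      · intro k hk
        have h1 : j - k = (j - (k + 1)) + 1 := by omega
        simp only [hp, h1, Function.iterate_succ_apply']
        exact hg _
    obtain ⟨v, hvC, hvI⟩ := hcyc _ hcycle
    obtain ⟨k, _, rfl⟩ := hvC
    exact (g^[j - k] x).2 (dcl_mono E I (Nat.zero_le N) hvI)
end

section
/- Let G = (V,E) be a finite self-loopless directed graph, I ⊆ V, and let G' = (V, E') where E' = E \ {(x,i) : x ∈ V, i ∈ I} (remove all edges pointing into I). Then I fills V in G if and only if I fills V in G' and G' is acyclic. -/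
theorem dag_connection {V : Type*} [Fintype V] (E : V → V → Prop)
    (hloopless : ∀ v, ¬ E v v) (I : Set V) :
    Fills E I ↔
      (Fills (fun x y => E x y ∧ y ∉ I) I ∧
        ¬ ∃ C : Set V, IsCycle (fun x y => E x y ∧ y ∉ I) C) := by

  set E' : V → V → Prop := fun x y => E x y ∧ y ∉ I with hE'
  have hsub : ∀ n, I ⊆ dcl E I n := by
    intro n; induction n with
    | zero => exact fun x hx => hx
    | succ n ih => exact fun x hx => Or.inl (ih hx)
  have hdcl : ∀ n, dcl E I n = dcl E' I n := by
    intro n; induction n with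
    | zero => rfl
    | succ n ih =>
      show dcl E I n ∪ Dtm E (dcl E I n) = dcl E' I n ∪ Dtm E' (dcl E' I n)
      rw [← ih]
      ext v
      by_cases hv : v ∈ dcl E I n
      · simp [hv]
      · have hvI : v ∉ I := fun h => hv (hsub n h)
        have hins : inSet E' v = inSet E v := by
          ext w; simp [inSet, hE', hvI]
        simp [Dtm, hins, hv]
  have hfills : Fills E I ↔ Fills E' I := by
    unfold Fills; simp_rw [hdcl]
  constructor
  · intro hF
    refine ⟨hfills.mp hF, ?_⟩
    rintro ⟨C, n, p, hn, hclosed, hedge, -⟩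
    have hpred : ∀ k ≤ n, ∃ j, j < n ∧ p (j + 1) = p k := by
      intro k hk
      rcases Nat.eq_zero_or_pos k with rfl | hpos
      · exact ⟨n - 1, Nat.sub_lt hn one_pos, by
          rw [Nat.sub_add_cancel hn, ← hclosed]⟩
      · exact ⟨k - 1, by omega, by rw [Nat.sub_add_cancel hpos]⟩
    have key : ∀ m, ∀ k ≤ n, p k ∉ dcl E' I m := by
      intro m; induction m with
      | zero =>
        intro k hk hmem
        obtain ⟨j, hj, hje⟩ := hpred k hk
        exact (hedge j hj).2 (hje ▸ hmem)
      | succ m ih =>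
        intro k hk hmem
        rcases hmem with h | h
        · exact ih k hk h
        · obtain ⟨j, hj, hje⟩ := hpred k hk
          have hmem2 : p j ∈ inSet E' (p k) := by
            rw [← hje]; exact hedge j hj
          exact ih j (le_of_lt hj) (h.2 hmem2)
    obtain ⟨m, hm⟩ := hfills.mp hF
    exact key m 0 (Nat.zero_le n) (by rw [hm]; trivial)
  · rintro ⟨hF, -⟩
    exact hfills.mpr hF
end

section
/- Let G = (V,E) be a finite self-loopless directed graph with I ⊆ V filling V, and let I' ⊆ V and I'_n denote the determination closure of I in the edge-reduced graph G' = (V, E \ {(x,i) : x ∈ V, i ∈ I}). Then for all n, I_n ⊆ I'_n, where I_n is the determination closure of I in G; in particular I fills V in G'. -/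
theorem closure_mono_reduced {V : Type*} [Fintype V] (E : V → V → Prop)
    (hloopless : ∀ v, ¬ E v v) (I : Set V) (hI : Fills E I) :
    (∀ n : ℕ, dcl E I n ⊆ dcl (fun x y => E x y ∧ y ∉ I) I n) ∧
      Fills (fun x y => E x y ∧ y ∉ I) I := by
  have hIsub : ∀ (F : V → V → Prop) (n : ℕ), I ⊆ dcl F I n := by
    intro F n
    induction n with
    | zero => exact subset_rfl
    | succ n ih => exact ih.trans Set.subset_union_left
  have hmono : ∀ n : ℕ, dcl E I n ⊆ dcl (fun x y => E x y ∧ y ∉ I) I n := by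
    intro n
    induction n with
    | zero => exact subset_rfl
    | succ n ih =>
      intro v hv
      rcases hv with hv | hv
      · exact Set.subset_union_left (ih hv)
      · by_cases hvI : v ∈ I
        · exact Set.subset_union_left (hIsub _ _ hvI)
        · right
          obtain ⟨⟨w, hw⟩, hsub⟩ := hv
          refine ⟨⟨w, ⟨hw, hvI⟩⟩, ?_⟩
          intro u hu
          exact ih (hsub hu.1)
  refine ⟨hmono, ?_⟩
  obtain ⟨n, hn⟩ := hI
  exact ⟨n, Set.eq_univ_of_univ_subset (hn ▸ hmono n)⟩
end

section
/- Let G = (V,E) be the finite self-loopless directed graph on V = {0,1,2} with all possible edges between distinct vertices. Then no singleton subset of V is filling, and every minimal filling subset I contains a minimal cycle C with |I ∩ C| ≥ 2. Hence minimal filling sets need not intersect every minimal cycle in exactly one vertex. -/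
/-- A cycle containing no other cycle as a proper subset. -/
def MinCycle {V : Type*} (E : V → V → Prop) (C : Set V) : Prop :=
  IsCycle E C ∧ ∀ C' ⊆ C, IsCycle E C' → C' = C

/-- A filling set none of whose proper subsets is filling. -/
def MinFilling {V : Type*} (E : V → V → Prop) (I : Set V) : Prop :=
  Fills E I ∧ ∀ J ⊂ I, ¬ Fills E J

theorem minimal_filling_cycle_two :
    let E : Fin 3 → Fin 3 → Prop := fun x y => x ≠ y
    (∀ v : Fin 3, ¬ Fills E {v}) ∧
      ∀ I : Set (Fin 3), MinFilling E I →
        ∃ C : Set (Fin 3), MinCycle E C ∧ 2 ≤ (I ∩ C).ncard := by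
  intro E
  have hw : ∀ w : Fin 3, w + 1 ≠ w ∧ w + 2 ≠ w ∧ w + 1 ≠ w + 2 := by decide
  have hsub : ∀ S : Set (Fin 3), S.Subsingleton → ¬ Fills E S := by
    intro S hS hF
    have hd : ∀ n, dcl E S n ⊆ S := by
      intro n
      induction n with
      | zero => exact le_refl _
      | succ n ih =>
        intro x hx
        rcases hx with hx | hx
        · exact ih hx
        · exfalso
          obtain ⟨_, hsubs⟩ := hx
          have h1 : x + 1 ∈ inSet E x := (hw x).1
          have h2 : x + 2 ∈ inSet E x := (hw x).2.1
          exact (hw x).2.2 (hS (ih (hsubs h1)) (ih (hsubs h2)))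
    obtain ⟨n, hn⟩ := hF
    have h0 : (0 : Fin 3) ∈ S := hd n (hn ▸ Set.mem_univ _)
    have h1 : (1 : Fin 3) ∈ S := hd n (hn ▸ Set.mem_univ _)
    exact absurd (hS h0 h1) (by decide)
  constructor
  · exact fun v => hsub {v} Set.subsingleton_singleton
  · intro I hI
    have hnt : I.Nontrivial := by
      by_contra h
      exact hsub I (Set.not_nontrivial_iff.mp h) hI.1
    obtain ⟨a, ha, b, hb, hab⟩ := hnt
    refine ⟨{a, b}, ⟨⟨2, fun k => if k % 2 = 0 then a else b, by norm_num, by norm_num,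
        ?_, ?_⟩, ?_⟩, ?_⟩
    · intro k hk
      interval_cases k
      · simpa using hab
      · simpa using hab.symm
    · ext x
      simp only [Set.mem_image, Set.mem_setOf_eq, Set.mem_insert_iff, Set.mem_singleton_iff]
      constructor
      · rintro (rfl | rfl)
        · exact ⟨0, by norm_num⟩
        · exact ⟨1, by norm_num⟩
      · rintro ⟨k, -, rfl⟩
        by_cases h : k % 2 = 0 <;> simp [h]
    · intro C' hC' hcyc
      obtain ⟨n, p, hn, hclosed, hE, rfl⟩ := hcyc
      have hp0 : p 0 ∈ p '' {k | k ≤ n} := ⟨0, Nat.zero_le _, rfl⟩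
      have hp1 : p 1 ∈ p '' {k | k ≤ n} := ⟨1, hn, rfl⟩
      have hne : p 0 ≠ p 1 := hE 0 hn
      apply Set.Subset.antisymm hC'
      have h0 := hC' hp0
      have h1 := hC' hp1
      intro x hx
      rcases hx with rfl | rfl
      · rcases h0 with h | h
        · exact h ▸ hp0
        · rcases h1 with h' | h'
          · exact h' ▸ hp1
          · exact absurd (h.trans h'.symm) hne
      · rcases h1 with h | h
        · rcases h0 with h' | h'
          · exact absurd (h'.trans h.symm) hne
          · exact h' ▸ hp0
        · exact h ▸ hp1
    · have : I ∩ {a, b} = {a, b} := by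
        apply Set.inter_eq_self_of_subset_right
        intro x hx
        rcases hx with rfl | rfl
        · exact ha
        · exact hb
      rw [this, Set.ncard_pair hab]
end

section
/- Let G = (V,E) be a finite self-loopless directed graph and I ⊆ V. Then I p-fills V if and only if I intersects every strongly connected component of G that has no incoming edges in the condensation G/≃. -/
/-- Vertices p-determined by `S`. -/
def pDtm {V : Type*} (E : V → V → Prop) (S : Set V) : Set V :=
  {v | (inSet E v ∩ S).Nonempty}

/-- Iterated p-determination closure. -/
def pdcl {V : Type*} (E : V → V → Prop) (I : Set V) : ℕ → Set V
  | 0 => I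
  | n + 1 => pdcl E I n ∪ pDtm E (pdcl E I n)

/-- `I` p-fills the vertex set. -/
def PFills {V : Type*} (E : V → V → Prop) (I : Set V) : Prop :=
  ∃ n, pdcl E I n = Set.univ

/-- `x` and `y` are strongly connected. -/
def SConn {V : Type*} (E : V → V → Prop) (x y : V) : Prop :=
  Relation.ReflTransGen E x y ∧ Relation.ReflTransGen E y x

/-- `C` is a strongly connected component, i.e. an equivalence class of `SConn`. -/
def IsSCC {V : Type*} (E : V → V → Prop) (C : Set V) : Prop :=
  ∃ x : V, C = {y | SConn E x y}

/-- Edge relation of the condensation graph, on strongly connected components. -/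
def sccEdge {V : Type*} (E : V → V → Prop) (C D : Set V) : Prop :=
  IsSCC E C ∧ IsSCC E D ∧ C ≠ D ∧ ∃ c ∈ C, ∃ d ∈ D, E c d

lemma pdcl_mono' {V : Type*} (E : V → V → Prop) (I : Set V) :
    Monotone (pdcl E I) := by
  apply monotone_nat_of_le_succ
  intro n
  exact Set.subset_union_left

lemma mem_pdcl_of_reach' {V : Type*} (E : V → V → Prop) (I : Set V)
    {u v : V} (hu : u ∈ I) (h : Relation.ReflTransGen E u v) :
    ∃ n, v ∈ pdcl E I n := by
  induction h with
  | refl => exact ⟨0, hu⟩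
  | tail _ hwv ih =>
    obtain ⟨n, hn⟩ := ih
    exact ⟨n + 1, Or.inr ⟨_, hwv, hn⟩⟩

lemma pdcl_subset_reach' {V : Type*} (E : V → V → Prop) (I : Set V) :
    ∀ n, pdcl E I n ⊆ {v | ∃ u ∈ I, Relation.ReflTransGen E u v} := by
  intro n
  induction n with
  | zero => exact fun v hv => ⟨v, hv, Relation.ReflTransGen.refl⟩
  | succ n ih =>
    rintro v (hv | ⟨w, hwv, hw⟩)
    · exact ih hv
    · obtain ⟨u, hu, hru⟩ := ih hw
      exact ⟨u, hu, hru.tail hwv⟩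

theorem chara2 {V : Type*} [Fintype V] (E : V → V → Prop)
    (hloopless : ∀ v, ¬ E v v) (I : Set V) :
    PFills E I ↔
      ∀ C : Set V, IsSCC E C → (∀ x ∉ C, ∀ c ∈ C, ¬ E x c) → (I ∩ C).Nonempty := by
  constructor
  · rintro ⟨n, hn⟩ C ⟨x, rfl⟩ hnoin
    have hx : x ∈ {y | SConn E x y} := ⟨Relation.ReflTransGen.refl, Relation.ReflTransGen.refl⟩
    have hxmem : x ∈ pdcl E I n := hn ▸ Set.mem_univ x
    obtain ⟨u, hu, hru⟩ := pdcl_subset_reach' E I n hxmem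
    have huC : ∀ w, Relation.ReflTransGen E w x → w ∈ {y | SConn E x y} := by
      intro w hw
      induction hw using Relation.ReflTransGen.head_induction_on with
      | refl => exact hx
      | head hac _ ih =>
        by_contra hnot
        exact hnoin _ hnot _ ih hac
    exact ⟨u, hu, huC u hru⟩
  · intro H
    have key : ∀ v : V, ∃ u ∈ I, Relation.ReflTransGen E u v := by
      intro v
      set f : V → ℕ := fun w => ({x | Relation.ReflTransGen E x w}).ncard with hf
      have hne : (f '' {w | Relation.ReflTransGen E w v}).Nonempty :=
        ⟨f v, v, Relation.ReflTransGen.refl, rfl⟩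
      obtain ⟨u, huR, hufeq⟩ := Nat.sInf_mem hne
      -- u is a minimal ancestor of v
      have hmin : ∀ w, Relation.ReflTransGen E w v → f u ≤ f w := by
        intro w hw
        rw [hufeq]
        exact Nat.sInf_le ⟨w, hw, rfl⟩
      -- its SCC has no incoming edges
      have hC : ∀ x ∉ {y | SConn E u y}, ∀ c ∈ {y | SConn E u y}, ¬ E x c := by
        intro x hx c hc hxc
        have hxu : Relation.ReflTransGen E x u :=
          (Relation.ReflTransGen.single hxc).trans hc.2
        have hxv : Relation.ReflTransGen E x v := hxu.trans huR
        have h1 : f u ≤ f x := hmin x hxv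
        have hsub : {y | Relation.ReflTransGen E y x} ⊂ {y | Relation.ReflTransGen E y u} := by
          constructor
          · intro y hy
            exact hy.trans hxu
          · intro hcon
            have : Relation.ReflTransGen E u x := hcon Relation.ReflTransGen.refl
            exact hx ⟨this, hxu⟩
        have h2 : f x < f u := Set.ncard_lt_ncard hsub (Set.toFinite _)
        omega
      obtain ⟨i, hiI, hiC⟩ := H _ ⟨u, rfl⟩ hC
      exact ⟨i, hiI, hiC.2.trans huR⟩
    choose n hn using fun v => mem_pdcl_of_reach' E I (key v).choose_spec.1
      (key v).choose_spec.2
    refine ⟨Finset.univ.sup n, ?_⟩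
    apply Set.eq_univ_of_forall
    intro v
    exact pdcl_mono' E I (Finset.le_sup (Finset.mem_univ v)) (hn v)
end
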